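/- Let q ≥ 2, let 𝒯 = {X_1 → expr_1, …, X_n → expr_n} be an SLP representing T with |T| ≥ q in which every variable occurs at least once in the derivation tree, let G_q = (V, E_r) be the right q-gram neighbor graph of 𝒯, and let X_{i_1} be the label of ξ(1,q). Then every variable X_j ∈ V with j ≠ i_1 is reachable from X_{i_1}: there exists a directed path from X_{i_1} to X_j in G_q. -/

import Mathlib

/-- A straight line program over alphabet `α`: variables are `Fin n` (variable
`X_i` of the paper corresponds to index `i-1`), each with either a terminal
rule (a single character) or a nonterminal rule `X_i → X_j X_k` with `j,k < i`. -/
structure SLP (α : Type) where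
  n : ℕ
  npos : 0 < n
  rule : Fin n → α ⊕ (Fin n × Fin n)
  wf : ∀ i jk, rule i = Sum.inr jk → jk.1 < i ∧ jk.2 < i

namespace SLP

variable {α : Type}

/-- the string `val(X_i)` derived by a variable -/
def val (S : SLP α) (i : Fin S.n) : List α :=
  match h : S.rule i with
  | Sum.inl a => [a]
  | Sum.inr jk =>
    have _h1 := (S.wf i jk h).1
    have _h2 := (S.wf i jk h).2
    S.val jk.1 ++ S.val jk.2
termination_by i.val

/-- the last variable `X_n` -/
def lastIdx (S : SLP α) : Fin S.n := ⟨S.n - 1, Nat.sub_lt S.npos Nat.one_pos⟩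

/-- the string `T` represented by the SLP -/
def text (S : SLP α) : List α := S.val S.lastIdx

/-- `T([i:j])`: the (1-based, inclusive) substring of a string -/
def substr (T : List α) (i j : ℕ) : List α := (T.drop (i - 1)).take (j + 1 - i)

/-- `pre(T,q)` -/
def spre (T : List α) (q : ℕ) : List α := T.take q

/-- `suf(T,q)` -/
def ssuf (T : List α) (q : ℕ) : List α := T.drop (T.length - q)

/-- `pre([b:e],q)` for intervals of positions -/
def ipre (b e q : ℕ) : Finset ℕ := Finset.Icc b (min (b + q - 1) e)

/-- `suf([b:e],q)` for intervals of positions -/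
def isuf (b e q : ℕ) : Finset ℕ := Finset.Icc (max b (e + 1 - q)) e

/-- `Occ(T,P)`: the set of (1-based) occurrences of `P` in `T` -/
def Occ [DecidableEq α] (T P : List α) : Finset ℕ :=
  (Finset.Icc 1 T.length).filter fun k => substr T k (k + P.length - 1) = P

/-- the multiset of labels of the nodes of the derivation tree rooted at
a node labeled `X_i` -/
def occsFrom (S : SLP α) (i : Fin S.n) : Multiset (Fin S.n) :=
  match h : S.rule i with
  | Sum.inl _ => {i}
  | Sum.inr jk =>
    have _h1 := (S.wf i jk h).1
    have _h2 := (S.wf i jk h).2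
    i ::ₘ (S.occsFrom jk.1 + S.occsFrom jk.2)
termination_by i.val

/-- `vOcc(X_i)`: the number of nodes of the derivation tree labeled `X_i` -/
def vOcc (S : SLP α) (i : Fin S.n) : ℕ := (S.occsFrom S.lastIdx).count i

/-- the string `t_i = suf(val(X_{ℓ(i)}),q-1) pre(val(X_{r(i)}),q-1)`
(and `[]` for a terminal rule) -/
def tstr (S : SLP α) (q : ℕ) (i : Fin S.n) : List α :=
  match S.rule i with
  | Sum.inl _ => []
  | Sum.inr jk => ssuf (S.val jk.1) (q - 1) ++ spre (S.val jk.2) (q - 1)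

/-- `label(X_i) = t_i([q:|t_i|])` -/
def labelStr (S : SLP α) (q : ℕ) (i : Fin S.n) : List α := (S.tstr q i).drop (q - 1)

/-- Nodes of the derivation tree are represented by the path from the root
(`false` = go to left child, `true` = go to right child).  `descend i p`
returns the label of the node reached from a node labeled `X_i` by path `p`. -/
def descend (S : SLP α) : Fin S.n → List Bool → Option (Fin S.n)
  | i, [] => some i
  | i, b :: p =>
    match S.rule i with
    | Sum.inl _ => none
    | Sum.inr jk => S.descend (if b then jk.2 else jk.1) p

/-- the label of the node of the derivation tree reached by path `p` from the root -/
def nodeVar (S : SLP α) (p : List Bool) : Option (Fin S.n) := S.descend S.lastIdx p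

/-- `p` is a valid node of the derivation tree -/
def IsNode (S : SLP α) (p : List Bool) : Prop := (S.nodeVar p).isSome

/-- the 0-based offset in `val(X_i)` of the part derived below path `p` -/
def offsetFrom (S : SLP α) : Fin S.n → List Bool → ℕ
  | _, [] => 0
  | i, b :: p =>
    match S.rule i with
    | Sum.inl _ => 0
    | Sum.inr jk =>
      if b then (S.val jk.1).length + S.offsetFrom jk.2 p
      else S.offsetFrom jk.1 p

/-- the 0-based offset in `T` of the interval derived by node `p` -/
def offset (S : SLP α) (p : List Bool) : ℕ := S.offsetFrom S.lastIdx p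

/-- `itv(v)`: the (1-based) interval of positions of `T` derived by node `p` -/
def itv (S : SLP α) (p : List Bool) : Finset ℕ :=
  match S.nodeVar p with
  | some i => Finset.Icc (S.offset p + 1) (S.offset p + (S.val i).length)
  | none => ∅

/-- `p = ξ(b,e)`: `p` is the deepest node whose interval contains `[b:e]`,
i.e. `itv(p) ⊇ [b:e]` and no proper descendant of `p` satisfies this. -/
def Stabs (S : SLP α) (p : List Bool) (b e : ℕ) : Prop :=
  S.IsNode p ∧ Finset.Icc b e ⊆ S.itv p ∧
  ∀ p' : List Bool, p <+: p' → p ≠ p' → S.IsNode p' → ¬ Finset.Icc b e ⊆ S.itv p'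

/-- `X_j` is a right `q`-gram neighbor of `X_i` -/
def RightNbr (S : SLP α) (q : ℕ) (i j : Fin S.n) : Prop :=
  i ≠ j ∧ ∃ u p p', 1 ≤ u ∧ u + q ≤ S.text.length ∧
    S.Stabs p u (u + q - 1) ∧ S.nodeVar p = some i ∧
    S.Stabs p' (u + 1) (u + q) ∧ S.nodeVar p' = some j

/-- `lm_q(X_i)`: the last variable of length `≥ q` on the sequence `i, ℓ(i), ℓ(ℓ(i)), …`
(meaningful when `|val(X_i)| ≥ q`) -/
def lm (S : SLP α) (q : ℕ) (i : Fin S.n) : Fin S.n :=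
  match h : S.rule i with
  | Sum.inl _ => i
  | Sum.inr jk =>
    have := (S.wf i jk h).1
    if (S.val jk.1).length < q then i else S.lm q jk.1
termination_by i.val

/-- `rm_q(X_i)`: the last variable of length `≥ q` on the sequence `i, r(i), r(r(i)), …` -/
def rm (S : SLP α) (q : ℕ) (i : Fin S.n) : Fin S.n :=
  match h : S.rule i with
  | Sum.inl _ => i
  | Sum.inr jk =>
    have := (S.wf i jk h).2
    if (S.val jk.2).length < q then i else S.rm q jk.2
termination_by i.val

/-- `lm_q` returning `null` (`none`) when `|val(X_i)| < q` -/
def lmOpt (S : SLP α) (q : ℕ) (i : Fin S.n) : Option (Fin S.n) :=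
  if (S.val i).length < q then none else some (S.lm q i)

/-- `rm_q` returning `null` (`none`) when `|val(X_i)| < q` -/
def rmOpt (S : SLP α) (q : ℕ) (i : Fin S.n) : Option (Fin S.n) :=
  if (S.val i).length < q then none else some (S.rm q i)

/-- `LSpine S i k`: `k` occurs in the sequence `i, ℓ(i), ℓ(ℓ(i)), …`
(the leftmost path of the derivation subtree rooted at a node labeled `X_i`) -/
inductive LSpine (S : SLP α) : Fin S.n → Fin S.n → Prop
  | refl (i : Fin S.n) : LSpine S i i
  | step {i k : Fin S.n} {jk : Fin S.n × Fin S.n} :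
      S.rule i = Sum.inr jk → LSpine S jk.1 k → LSpine S i k

variable {α : Type} (S : SLP α)

theorem val_inl {i : Fin S.n} {a : α} (h : S.rule i = Sum.inl a) : S.val i = [a] := by
  rw [val]; split <;> simp_all

theorem val_inr {i : Fin S.n} {jk : Fin S.n × Fin S.n} (h : S.rule i = Sum.inr jk) :
    S.val i = S.val jk.1 ++ S.val jk.2 := by
  rw [val]; split <;> simp_all

theorem val_len_pos (i : Fin S.n) : 0 < (S.val i).length := by
  cases h : S.rule i with
  | inl a => simp [S.val_inl h]
  | inr jk =>
    have := (S.wf i jk h).1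
    have := val_len_pos jk.1
    simp [S.val_inr h]; omega
termination_by i.val

theorem descend_append (i : Fin S.n) (s t : List Bool) :
    S.descend i (s ++ t) = (S.descend i s).bind fun k => S.descend k t := by
  induction s generalizing i with
  | nil => simp [descend]
  | cons b s ih =>
    cases h : S.rule i with
    | inl a => simp [descend, h]
    | inr jk => simp [descend, h, ih]

theorem offsetFrom_append {i k : Fin S.n} (s t : List Bool) (h : S.descend i s = some k) :
    S.offsetFrom i (s ++ t) = S.offsetFrom i s + S.offsetFrom k t := by
  induction s generalizing i with
  | nil => simp [descend] at h; subst h; simp [offsetFrom]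
  | cons b s ih =>
    cases hr : S.rule i with
    | inl a => simp [descend, hr] at h
    | inr jk =>
      simp only [descend, hr] at h
      cases b
      · simp only [Bool.false_eq_true, if_false] at h
        simp only [List.cons_append, offsetFrom, hr, Bool.false_eq_true, if_false, List.append_eq, ih h]
      · simp only [if_true] at h
        simp only [List.cons_append, offsetFrom, hr, if_true, List.append_eq, ih h]
        omega

theorem offsetFrom_add_le {i m : Fin S.n} (s : List Bool) (h : S.descend i s = some m) :
    S.offsetFrom i s + (S.val m).length ≤ (S.val i).length := by
  induction s generalizing i with
  | nil => simp [descend] at h; subst h; simp [offsetFrom]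
  | cons b s ih =>
    cases hr : S.rule i with
    | inl a => simp [descend, hr] at h
    | inr jk =>
      simp only [descend, hr] at h
      have hv : (S.val i).length = (S.val jk.1).length + (S.val jk.2).length := by
        simp [S.val_inr hr]
      cases b
      · simp only [Bool.false_eq_true, if_false] at h
        have := ih h
        simp only [offsetFrom, hr, Bool.false_eq_true, if_false]
        omega
      · simp only [if_true] at h
        have := ih h
        simp only [offsetFrom, hr, if_true]
        omega

theorem nodeVar_append (s t : List Bool) :
    S.nodeVar (s ++ t) = (S.nodeVar s).bind fun k => S.descend k t :=
  S.descend_append _ s t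

theorem nodeVar_nil : S.nodeVar [] = some S.lastIdx := rfl

theorem offset_nil : S.offset [] = 0 := rfl

theorem itv_eq {p : List Bool} {i : Fin S.n} (h : S.nodeVar p = some i) :
    S.itv p = Finset.Icc (S.offset p + 1) (S.offset p + (S.val i).length) := by
  unfold itv; rw [h]

theorem itv_none {p : List Bool} (h : S.nodeVar p = none) : S.itv p = ∅ := by
  unfold itv; rw [h]

theorem offset_append {p : List Bool} {k : Fin S.n} (h : S.nodeVar p = some k)
    (t : List Bool) : S.offset (p ++ t) = S.offset p + S.offsetFrom k t :=
  S.offsetFrom_append p t h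

theorem itv_append_subset {p : List Bool} {k : Fin S.n} (hk : S.nodeVar p = some k)
    (t : List Bool) : S.itv (p ++ t) ⊆ S.itv p := by
  cases hm : S.descend k t with
  | none =>
    have : S.nodeVar (p ++ t) = none := by rw [nodeVar_append, hk]; simpa
    simp [S.itv_none this]
  | some m =>
    have hnv : S.nodeVar (p ++ t) = some m := by rw [nodeVar_append, hk]; simpa
    rw [S.itv_eq hk, S.itv_eq hnv, S.offset_append hk]
    have h1 := S.offsetFrom_add_le t hm
    apply Finset.Icc_subset_Icc <;> omega

theorem itv_subset_text {p : List Bool} : S.itv p ⊆ Finset.Icc 1 S.text.length := by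
  have h := S.itv_append_subset S.nodeVar_nil p
  rw [S.itv_eq S.nodeVar_nil, offset_nil] at h
  simpa [text] using h

theorem node_cons {c : List Bool} {x : Bool} {s : List Bool} (h : S.IsNode (c ++ x :: s)) :
    ∃ i jk, S.nodeVar c = some i ∧ S.rule i = Sum.inr jk := by
  unfold IsNode at h
  rw [nodeVar_append] at h
  cases hc : S.nodeVar c with
  | none => rw [hc] at h; exact absurd h (by simp)
  | some i =>
    rw [hc] at h; simp only [Option.bind_some] at h
    cases hr : S.rule i with
    | inl a => simp [descend, hr] at h
    | inr jk => exact ⟨i, jk, hc ▸ rfl, hr⟩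

theorem nodeVar_left {p : List Bool} {i : Fin S.n} {jk : Fin S.n × Fin S.n}
    (hi : S.nodeVar p = some i) (hr : S.rule i = Sum.inr jk) :
    S.nodeVar (p ++ [false]) = some jk.1 := by
  rw [nodeVar_append, hi]; simp [descend, hr]

theorem nodeVar_right {p : List Bool} {i : Fin S.n} {jk : Fin S.n × Fin S.n}
    (hi : S.nodeVar p = some i) (hr : S.rule i = Sum.inr jk) :
    S.nodeVar (p ++ [true]) = some jk.2 := by
  rw [nodeVar_append, hi]; simp [descend, hr]

theorem offset_left {p : List Bool} {i : Fin S.n} {jk : Fin S.n × Fin S.n}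
    (hi : S.nodeVar p = some i) (hr : S.rule i = Sum.inr jk) :
    S.offset (p ++ [false]) = S.offset p := by
  rw [S.offset_append hi]; simp [offsetFrom, hr]

theorem offset_right {p : List Bool} {i : Fin S.n} {jk : Fin S.n × Fin S.n}
    (hi : S.nodeVar p = some i) (hr : S.rule i = Sum.inr jk) :
    S.offset (p ++ [true]) = S.offset p + (S.val jk.1).length := by
  rw [S.offset_append hi]; simp [offsetFrom, hr]

theorem subset_leftChild {p s : List Bool} {i : Fin S.n} {jk : Fin S.n × Fin S.n}
    (hi : S.nodeVar p = some i) (hr : S.rule i = Sum.inr jk) :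
    S.itv (p ++ false :: s) ⊆
      Finset.Icc (S.offset p + 1) (S.offset p + (S.val jk.1).length) := by
  have h1 : p ++ false :: s = (p ++ [false]) ++ s := by simp
  rw [h1]
  have h2 := S.itv_append_subset (S.nodeVar_left hi hr) s
  rwa [S.itv_eq (S.nodeVar_left hi hr), S.offset_left hi hr] at h2

theorem subset_rightChild {p s : List Bool} {i : Fin S.n} {jk : Fin S.n × Fin S.n}
    (hi : S.nodeVar p = some i) (hr : S.rule i = Sum.inr jk) :
    S.itv (p ++ true :: s) ⊆
      Finset.Icc (S.offset p + (S.val jk.1).length + 1)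
        (S.offset p + (S.val jk.1).length + (S.val jk.2).length) := by
  have h1 : p ++ true :: s = (p ++ [true]) ++ s := by simp
  rw [h1]
  have h2 := S.itv_append_subset (S.nodeVar_right hi hr) s
  rwa [S.itv_eq (S.nodeVar_right hi hr), S.offset_right hi hr] at h2

theorem list_trichotomy : ∀ p p' : List Bool, p <+: p' ∨ p' <+: p ∨
    ∃ c x y s t, x ≠ y ∧ p = c ++ x :: s ∧ p' = c ++ y :: t := by
  intro p
  induction p with
  | nil => intro p'; exact Or.inl (List.nil_prefix)
  | cons a s ih =>
    intro p'
    cases p' with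
    | nil => exact Or.inr (Or.inl (List.nil_prefix))
    | cons b t =>
      by_cases hab : a = b
      · subst hab
        rcases ih t with h | h | ⟨c, x, y, s', t', hxy, hs, ht⟩
        · exact Or.inl (List.cons_prefix_cons.mpr ⟨rfl, h⟩)
        · exact Or.inr (Or.inl (List.cons_prefix_cons.mpr ⟨rfl, h⟩))
        · exact Or.inr (Or.inr ⟨a :: c, x, y, s', t', hxy, by simp [hs], by simp [ht]⟩)
      · exact Or.inr (Or.inr ⟨[], a, b, s, t, hab, rfl, rfl⟩)

theorem diverge_contra {c s t : List Bool} {b e : ℕ} (hbe : b ≤ e) {x y : Bool} (hxy : x ≠ y)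
    (hn1 : S.IsNode (c ++ x :: s)) (hn2 : S.IsNode (c ++ y :: t))
    (h1 : Finset.Icc b e ⊆ S.itv (c ++ x :: s))
    (h2 : Finset.Icc b e ⊆ S.itv (c ++ y :: t)) : False := by
  obtain ⟨i, jk, hc, hr⟩ := S.node_cons hn1
  have hb1 := h1 (Finset.mem_Icc.mpr ⟨le_refl b, hbe⟩)
  have hb2 := h2 (Finset.mem_Icc.mpr ⟨le_refl b, hbe⟩)
  cases x <;> cases y <;> try exact hxy rfl
  · -- x = false, y = true
    have e1 := S.subset_leftChild (s := s) hc hr hb1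
    have e2 := S.subset_rightChild (s := t) hc hr hb2
    rw [Finset.mem_Icc] at e1 e2; omega
  · -- x = true, y = false
    have e1 := S.subset_rightChild (s := s) hc hr hb1
    have e2 := S.subset_leftChild (s := t) hc hr hb2
    rw [Finset.mem_Icc] at e1 e2; omega

theorem stab_unique {p p' : List Bool} {b e : ℕ} (hbe : b ≤ e)
    (h1 : S.Stabs p b e) (h2 : S.Stabs p' b e) : p = p' := by
  rcases list_trichotomy p p' with h | h | ⟨c, x, y, s, t, hxy, rfl, rfl⟩
  · by_contra hne; exact h1.2.2 p' h hne h2.1 h2.2.1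
  · by_contra hne
    exact h2.2.2 p h (fun hh => hne hh.symm) h1.1 h1.2.1
  · exact absurd (S.diverge_contra hbe hxy h1.1 h2.1 h1.2.1 h2.2.1) not_false

theorem rule_inl_descend {i : Fin S.n} {a : α} (hr : S.rule i = Sum.inl a)
    (x : Bool) (s : List Bool) : S.descend i (x :: s) = none := by
  simp [descend, hr]

theorem stab_exists_aux (b e : ℕ) : ∀ N (p : List Bool) (i : Fin S.n), i.val < N →
    S.nodeVar p = some i → Finset.Icc b e ⊆ S.itv p →
    ∃ p', p <+: p' ∧ S.Stabs p' b e := by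
  intro N
  induction N with
  | zero => intro p i h; omega
  | succ N ih =>
    intro p i hlt hi hsub
    have hnode : S.IsNode p := by unfold IsNode; rw [hi]; rfl
    cases hr : S.rule i with
    | inl a =>
      refine ⟨p, List.prefix_refl p, hnode, hsub, ?_⟩
      intro p' hpre hne hnode'
      obtain ⟨t, rfl⟩ := hpre
      cases t with
      | nil => exact absurd (by simp) hne
      | cons x s =>
        obtain ⟨i', jk, hi', hr'⟩ := S.node_cons hnode'
        rw [hi] at hi'
        cases hi'
        rw [hr] at hr'
        exact absurd hr' (by simp)
    | inr jk =>
      have hjk1 := (S.wf i jk hr).1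
      have hjk2 := (S.wf i jk hr).2
      by_cases hL : Finset.Icc b e ⊆ S.itv (p ++ [false])
      · obtain ⟨p', hpre, hst⟩ := ih (p ++ [false]) jk.1 (by omega)
          (S.nodeVar_left hi hr) hL
        exact ⟨p', (List.prefix_append p [false]).trans hpre, hst⟩
      · by_cases hR : Finset.Icc b e ⊆ S.itv (p ++ [true])
        · obtain ⟨p', hpre, hst⟩ := ih (p ++ [true]) jk.2 (by omega)
            (S.nodeVar_right hi hr) hR
          exact ⟨p', (List.prefix_append p [true]).trans hpre, hst⟩
        · refine ⟨p, List.prefix_refl p, hnode, hsub, ?_⟩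
          intro p' hpre hne hnode' hsub'
          obtain ⟨t, rfl⟩ := hpre
          cases t with
          | nil => exact hne (by simp)
          | cons x s =>
            have hx : p ++ x :: s = (p ++ [x]) ++ s := by simp
            have hsub2 : Finset.Icc b e ⊆ S.itv (p ++ [x]) := by
              refine hsub'.trans ?_
              rw [hx]
              cases x
              · exact S.itv_append_subset (S.nodeVar_left hi hr) s
              · exact S.itv_append_subset (S.nodeVar_right hi hr) s
            cases x
            · exact hL hsub2
            · exact hR hsub2

theorem stab_exists {b e : ℕ} (hb : 1 ≤ b) (he : e ≤ S.text.length) :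
    ∃ p' i, S.Stabs p' b e ∧ S.nodeVar p' = some i := by
  have hroot : Finset.Icc b e ⊆ S.itv [] := by
    rw [S.itv_eq S.nodeVar_nil, offset_nil]
    have : S.val S.lastIdx = S.text := rfl
    rw [this]
    simpa using Finset.Icc_subset_Icc hb he
  obtain ⟨p', _, hst⟩ := S.stab_exists_aux b e (S.lastIdx.val + 1) [] S.lastIdx
    (by omega) S.nodeVar_nil hroot
  have := hst.1
  unfold IsNode at this
  obtain ⟨i, hi⟩ := Option.isSome_iff_exists.mp this
  exact ⟨p', i, hst, hi⟩

theorem occsFrom_inl {i : Fin S.n} {a : α} (h : S.rule i = Sum.inl a) :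
    S.occsFrom i = {i} := by
  rw [occsFrom]; split <;> simp_all

theorem occsFrom_inr {i : Fin S.n} {jk : Fin S.n × Fin S.n} (h : S.rule i = Sum.inr jk) :
    S.occsFrom i = i ::ₘ (S.occsFrom jk.1 + S.occsFrom jk.2) := by
  rw [occsFrom]; split <;> simp_all

theorem occsFrom_mem (i : Fin S.n) {j : Fin S.n} (h : j ∈ S.occsFrom i) :
    ∃ s, S.descend i s = some j := by
  cases hr : S.rule i with
  | inl a =>
    rw [S.occsFrom_inl hr] at h
    rw [Multiset.mem_singleton] at h
    exact ⟨[], by simp [descend, h]⟩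
  | inr jk =>
    have hjk1 := (S.wf i jk hr).1
    have hjk2 := (S.wf i jk hr).2
    rw [S.occsFrom_inr hr] at h
    rcases Multiset.mem_cons.mp h with rfl | h
    · exact ⟨[], by simp [descend]⟩
    · rcases Multiset.mem_add.mp h with h | h
      · obtain ⟨s, hs⟩ := occsFrom_mem jk.1 h
        exact ⟨false :: s, by simpa [descend, hr] using hs⟩
      · obtain ⟨s, hs⟩ := occsFrom_mem jk.2 h
        exact ⟨true :: s, by simpa [descend, hr] using hs⟩
termination_by i.val

theorem straddle {v : List Bool} {j : Fin S.n} {q : ℕ} (hq : 2 ≤ q)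
    (hv : S.nodeVar v = some j) (hlen : q ≤ (S.val j).length) :
    ∃ u, 1 ≤ u ∧ u + q ≤ S.text.length + 1 ∧ S.Stabs v u (u + q - 1) := by
  cases hr : S.rule j with
  | inl a => rw [S.val_inl hr] at hlen; simp at hlen; omega
  | inr jk =>
    set L := (S.val jk.1).length with hLdef
    set Rl := (S.val jk.2).length with hRdef
    have hL : 0 < L := S.val_len_pos jk.1
    have hR : 0 < Rl := S.val_len_pos jk.2
    have hlen' : (S.val j).length = L + Rl := by rw [S.val_inr hr]; simp [hLdef, hRdef]
    set off := S.offset v with hoffdef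
    set s := min L (L + Rl + 1 - q) with hsdef
    refine ⟨off + s, by omega, ?_, ?_, ?_, ?_⟩
    · -- off + s + q ≤ |T| + 1
      have h1 : off + s + q - 1 ∈ S.itv v := by
        rw [S.itv_eq hv, Finset.mem_Icc, hlen']
        omega
      have h2 := S.itv_subset_text h1
      rw [Finset.mem_Icc] at h2
      omega
    · -- IsNode
      unfold IsNode; rw [hv]; rfl
    · -- window subset
      rw [S.itv_eq hv, hlen']
      apply Finset.Icc_subset_Icc <;> omega
    · -- deepest
      intro p' hpre hne hnode' hsub'
      obtain ⟨t, rfl⟩ := hpre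
      cases t with
      | nil => exact hne (by simp)
      | cons x s' =>
        cases x
        · have h1 := S.subset_leftChild (s := s') hv hr
          have h2 : off + L + 1 ∈ Finset.Icc (off + s) (off + s + q - 1) := by
            rw [Finset.mem_Icc]; omega
          have h3 := h1 (hsub' h2)
          rw [Finset.mem_Icc] at h3
          omega
        · have h1 := S.subset_rightChild (s := s') hv hr
          have h2 : off + L ∈ Finset.Icc (off + s) (off + s + q - 1) := by
            rw [Finset.mem_Icc]; omega
          have h3 := h1 (hsub' h2)
          rw [Finset.mem_Icc] at h3
          omega

end SLP
/-- in the right `q`-gram neighbor graph, every vertex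
(variable of length `≥ q`) other than `X_{i₁} = ξ(1,q)` is reachable from
`X_{i₁}` by a directed path. -/
theorem stmt8 {α : Type} (q : ℕ) (hq : 2 ≤ q) (S : SLP α)
    (hT : q ≤ S.text.length) (hocc : ∀ i, 1 ≤ S.vOcc i)
    (p : List Bool) (i1 : Fin S.n)
    (hstab : S.Stabs p 1 q) (hvar : S.nodeVar p = some i1)
    (j : Fin S.n) (hj : q ≤ (S.val j).length) (hne : j ≠ i1) :
    Relation.ReflTransGen (fun a b => S.RightNbr q a b) i1 j := by
  have key : ∀ u, 1 ≤ u → u + q ≤ S.text.length + 1 →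
      ∀ p' i, S.Stabs p' u (u + q - 1) → S.nodeVar p' = some i →
      Relation.ReflTransGen (fun a b => S.RightNbr q a b) i1 i := by
    intro u
    induction u with
    | zero => omega
    | succ u ih =>
      intro h1 h2 p' i hs hv'
      by_cases hu : u = 0
      · subst hu
        have hq' : 0 + 1 + q - 1 = q := by omega
        rw [hq'] at hs
        have hpp := S.stab_unique (by omega : 1 ≤ q) hs hstab
        rw [hpp, hvar] at hv'
        cases hv'
        exact Relation.ReflTransGen.refl
      · have hu1 : 1 ≤ u := by omega
        obtain ⟨p₀, a, hs₀, ha⟩ := S.stab_exists (b := u) (e := u + q - 1) hu1 (by omega)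
        have hreach := ih hu1 (by omega) p₀ a hs₀ ha
        by_cases hai : a = i
        · subst hai; exact hreach
        · refine hreach.tail ?_
          have heq : u + 1 + q - 1 = u + q := by omega
          rw [heq] at hs
          exact ⟨hai, u, p₀, p', hu1, by omega, hs₀, ha, hs, hv'⟩
  have hmem : j ∈ S.occsFrom S.lastIdx := by
    have h := hocc j
    unfold SLP.vOcc at h
    exact Multiset.count_pos.mp (by omega)
  obtain ⟨v, hv⟩ := S.occsFrom_mem S.lastIdx hmem
  have hv' : S.nodeVar v = some j := hv
  obtain ⟨u, hu1, hu2, hstabv⟩ := S.straddle hq hv' hj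
  exact key u hu1 hu2 v j hstabv hv'
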